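/- Let V_{i_1}, …, V_{i_{2k}}, V_{i_1} be an even cycle in the communication graph where consecutive neighbors fly in opposite directions, and let β_{ab} denote the angle of the supporting line of edge (a,b), with β_{ab} = β_{ba}. Suppose every consecutive pair on the cycle satisfies the opposite-direction synchronization relation α_{i_{m+1}} ≡ 2β_{i_{m+1} i_m} − α_{i_m} + π (mod 2π). Then such angles α exist (i.e., the cycle is synchronizable) if and only if β_{i_1 i_2} − β_{i_2 i_3} + β_{i_3 i_4} − ⋯ + β_{i_{2k−1} i_{2k}} − β_{i_{2k} i_1} ≡ 0 (mod π). -/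

import Mathlib

open Real
open Fin.NatCast

private lemma val_add_one' {k : ℕ} [NeZero (2 * k)] (h2 : 1 < 2 * k) (m : Fin (2 * k)) :
    ((m + 1 : Fin (2 * k)) : ℕ) = ((m : ℕ) + 1) % (2 * k) := by
  rw [Fin.add_def]
  simp [Fin.val_one', Nat.mod_eq_of_lt h2]

private lemma sign_add_one {k : ℕ} [NeZero (2 * k)] (hk : 0 < k) (m : Fin (2 * k)) :
    ((-1 : ℝ)) ^ (((m + 1 : Fin (2 * k))) : ℕ) = -(-1 : ℝ) ^ (m : ℕ) := by
  have h2 : 1 < 2 * k := by omega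
  have hv := val_add_one' h2 m
  rcases lt_or_eq_of_le (Nat.succ_le_of_lt m.isLt) with h | h
  · rw [hv, Nat.mod_eq_of_lt h, pow_succ]; ring
  · have h' : (m : ℕ) + 1 = 2 * k := h
    rw [hv, h', Nat.mod_self, pow_zero]
    have hm : (m : ℕ) = 2 * k - 1 := by omega
    have hodd : Odd (2 * k - 1) := ⟨k - 1, by omega⟩
    rw [hm, hodd.neg_one_pow]; ring

private lemma even_sign_sum {k : ℕ} :
    ∑ i ∈ Finset.range (2 * k), (-1 : ℝ) ^ i = 0 := by
  rw [neg_one_geom_sum, if_pos (even_two_mul k)]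

/-- an even cycle `i_1, …, i_{2k}` with neighbors flying in opposite
directions, where edge `m` (from vertex `m` to vertex `m+1`, cyclically) has
supporting-line angle `β m`, admits starting angles satisfying the
opposite-direction synchronization relation
`α_{m+1} ≡ 2 β_m − α_m + π (mod 2π)` on every edge iff the alternating sum
`β_0 − β_1 + β_2 − ⋯ − β_{2k−1}` is an integer multiple of `π`. -/
theorem stmt5 (k : ℕ) (hk : 0 < k) [inst : NeZero (2 * k)] (β : Fin (2 * k) → ℝ) :
    (∃ α : Fin (2 * k) → ℝ,
        ∀ m : Fin (2 * k),
          ((α (m + 1) : ℝ) : Real.Angle)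
            = ((2 * β m - α m + π : ℝ) : Real.Angle)) ↔
      (∃ z : ℤ, (∑ m : Fin (2 * k), (-1 : ℝ) ^ (m : ℕ) * β m) = z * π) := by
  constructor
  · rintro ⟨α, hα⟩
    have h : ∀ m : Fin (2 * k), ∃ n : ℤ,
        α (m + 1) - (2 * β m - α m + π) = 2 * π * n :=
      fun m => Real.Angle.angle_eq_iff_two_pi_dvd_sub.mp (hα m)
    choose n hn using h
    have key : ∑ m : Fin (2 * k), (-1 : ℝ) ^ (m : ℕ) * (α (m + 1) - (2 * β m - α m + π))
        = 2 * π * ∑ m : Fin (2 * k), (-1 : ℝ) ^ (m : ℕ) * (n m : ℝ) := by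
      rw [Finset.mul_sum]
      exact Finset.sum_congr rfl fun m _ => by rw [hn m]; ring
    have tel : ∑ m : Fin (2 * k), (-1 : ℝ) ^ (m : ℕ) * α m
        = - ∑ m : Fin (2 * k), (-1 : ℝ) ^ (m : ℕ) * α (m + 1) := by
      have h1 : ∑ m : Fin (2 * k), (-1 : ℝ) ^ (m : ℕ) * α m
          = ∑ m : Fin (2 * k), (-1 : ℝ) ^ (((m + 1 : Fin (2 * k))) : ℕ) * α (m + 1) :=
        (Equiv.sum_comp (Equiv.addRight (1 : Fin (2 * k)))
          (fun m => (-1 : ℝ) ^ (m : ℕ) * α m)).symm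
      rw [h1, ← Finset.sum_neg_distrib]
      exact Finset.sum_congr rfl fun m _ => by rw [sign_add_one hk m]; ring
    have hsgn : ∑ m : Fin (2 * k), (-1 : ℝ) ^ (m : ℕ) = 0 := by
      rw [Fin.sum_univ_eq_sum_range (fun i => (-1 : ℝ) ^ i) (2 * k)]
      exact even_sign_sum
    have expand : ∑ m : Fin (2 * k), (-1 : ℝ) ^ (m : ℕ) * (α (m + 1) - (2 * β m - α m + π))
        = (∑ m : Fin (2 * k), (-1 : ℝ) ^ (m : ℕ) * α (m + 1))
          + (∑ m : Fin (2 * k), (-1 : ℝ) ^ (m : ℕ) * α m)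
          - 2 * (∑ m : Fin (2 * k), (-1 : ℝ) ^ (m : ℕ) * β m)
          - π * (∑ m : Fin (2 * k), (-1 : ℝ) ^ (m : ℕ)) := by
      rw [Finset.mul_sum, Finset.mul_sum, ← Finset.sum_add_distrib,
        ← Finset.sum_sub_distrib, ← Finset.sum_sub_distrib]
      exact Finset.sum_congr rfl fun m _ => by ring
    refine ⟨-∑ m : Fin (2 * k), (-1 : ℤ) ^ (m : ℕ) * n m, ?_⟩
    rw [expand, tel, hsgn] at key
    push_cast
    linarith [key]
  · rintro ⟨z, hz⟩
    set c : ℕ → ℝ := fun j => 2 * β (j : Fin (2 * k)) + π with hc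
    refine ⟨fun m => (-1 : ℝ) ^ ((m : ℕ) + 1) * ∑ j ∈ Finset.range (m : ℕ), (-1 : ℝ) ^ j * c j, ?_⟩
    intro m
    dsimp only
    have hcm : c (m : ℕ) = 2 * β m + π := by
      show 2 * β (((m : ℕ) : Fin (2 * k))) + π = 2 * β m + π
      rw [Fin.cast_val_eq_self]
    rcases lt_or_eq_of_le (Nat.succ_le_of_lt m.isLt) with h | h
    · -- non-wrapping edge: exact real equality
      have hv : ((m + 1 : Fin (2 * k)) : ℕ) = (m : ℕ) + 1 := by
        rw [val_add_one' (show 1 < 2 * k by omega) m]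
        exact Nat.mod_eq_of_lt h
      congr 1
      rw [hv, Finset.sum_range_succ, hcm]
      have hsq : (-1 : ℝ) ^ (m : ℕ) * (-1 : ℝ) ^ (m : ℕ) = 1 := by
        rw [← pow_add]
        exact Even.neg_one_pow ⟨_, rfl⟩
      linear_combination (2 * β m + π) * hsq
    · -- wrapping edge: m = last
      have h' : (m : ℕ) + 1 = 2 * k := h
      have hv : ((m + 1 : Fin (2 * k)) : ℕ) = 0 := by
        rw [val_add_one' (show 1 < 2 * k by omega) m, h', Nat.mod_self]
      rw [Real.Angle.angle_eq_iff_two_pi_dvd_sub]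
      refine ⟨z, ?_⟩
      rw [hv]
      simp only [Finset.range_zero, Finset.sum_empty, mul_zero, zero_mul]
      have hm : (m : ℕ) = 2 * k - 1 := by omega
      have hodd : Odd (2 * k - 1) := ⟨k - 1, by omega⟩
      have hS : ∑ j ∈ Finset.range (2 * k), (-1 : ℝ) ^ j * c j
          = 2 * (z * π) := by
        have hexp : ∑ j ∈ Finset.range (2 * k), (-1 : ℝ) ^ j * c j
            = 2 * (∑ j ∈ Finset.range (2 * k), (-1 : ℝ) ^ j * β (j : Fin (2 * k)))
              + π * (∑ j ∈ Finset.range (2 * k), (-1 : ℝ) ^ j) := by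
          rw [Finset.mul_sum, Finset.mul_sum, ← Finset.sum_add_distrib]
          exact Finset.sum_congr rfl fun j _ => by simp only [hc]; ring
        rw [hexp, even_sign_sum, mul_zero, add_zero]
        have hswap : ∑ j ∈ Finset.range (2 * k), (-1 : ℝ) ^ j * β (j : Fin (2 * k))
            = ∑ m : Fin (2 * k), (-1 : ℝ) ^ (m : ℕ) * β m := by
          rw [← Fin.sum_univ_eq_sum_range (fun j => (-1 : ℝ) ^ j * β (j : Fin (2 * k))) (2 * k)]
          exact Finset.sum_congr rfl fun m _ => by rw [Fin.cast_val_eq_self]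
        rw [hswap, hz]
      have hsplit : ∑ j ∈ Finset.range (2 * k), (-1 : ℝ) ^ j * c j
          = (∑ j ∈ Finset.range (2 * k - 1), (-1 : ℝ) ^ j * c j)
            + (-1 : ℝ) ^ (2 * k - 1) * c (2 * k - 1) := by
        have h21 : 2 * k = (2 * k - 1) + 1 := by omega
        conv_lhs => rw [h21]
        rw [Finset.sum_range_succ]
      have e1 : (-1 : ℝ) ^ ((m : ℕ) + 1) * ∑ j ∈ Finset.range (m : ℕ), (-1 : ℝ) ^ j * c j
          = ∑ j ∈ Finset.range (2 * k - 1), (-1 : ℝ) ^ j * c j := by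
        rw [hm, show 2 * k - 1 + 1 = 2 * k by omega, (even_two_mul k).neg_one_pow, one_mul]
      rw [e1]
      have hlast : (-1 : ℝ) ^ (2 * k - 1) * c (2 * k - 1) = -(2 * β m + π) := by
        rw [hodd.neg_one_pow, ← hm, hcm]; ring
      have e2 : ∑ j ∈ Finset.range (2 * k - 1), (-1 : ℝ) ^ j * c j
          = 2 * (z * π) + (2 * β m + π) := by
        rw [hsplit, hlast] at hS
        linarith [hS]
      rw [e2]
      ring
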